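/- Consider the optimization problem of maximizing ∑_{i=1}^N g(p_i) over nonnegative p = (p_1,...,p_N) and δ = (δ_1,...,δ_N) subject to (b) ∑_{i=1}^j p_i ≤ ∑_{i=1}^j E_i for all j, (c) ∑_{i=1}^j φ(g(p_i)) ≤ ∑_{i=1}^j (Ē_i + α δ_i) for all j, and (d) ∑_{i=1}^j δ_i ≤ ∑_{i=1}^j H_i for all j, where δ_i ≥ 0. Then the optimal value of this problem equals the optimal value of the problem of maximizing ∑_{i=1}^N g(p_i) over p subject only to (b) and (c') ∑_{i=1}^j φ(g(p_i)) ≤ ∑_{i=1}^j (Ē_i + α H_i) for all j. (I.e., setting δ_i = H_i, immediate energy transfer from helper to receiver, is optimal.) -/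

import Mathlib

open Finset

/-- Lemma 1: immediate transfer of the helper's energy to the receiver is
optimal — the problem with an explicit transfer policy `δ` has the same optimal
value as the problem where the receiver is credited `Ē i + α * H i` each slot. -/
theorem stmt_1 (N : ℕ) (hN : 0 < N)
    (E Ebar H : Fin N → ℝ)
    (hE : ∀ i, 0 ≤ E i) (hEbar : ∀ i, 0 ≤ Ebar i) (hH : ∀ i, 0 ≤ H i)
    (α : ℝ) (hα0 : 0 ≤ α) (hα1 : α ≤ 1)
    (g : ℝ → ℝ) (hg : ∀ p, g p = (1 / 2) * Real.log (1 + p))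
    (φ : ℝ → ℝ)
    (hφconv : ConvexOn ℝ (Set.Ici 0) φ)
    (hφmono : MonotoneOn φ (Set.Ici 0)) :
    sSup {v : ℝ | ∃ p δ : Fin N → ℝ,
        (∀ i, 0 ≤ p i) ∧ (∀ i, 0 ≤ δ i) ∧
        (∀ j : Fin N, ∑ i ∈ Iic j, p i ≤ ∑ i ∈ Iic j, E i) ∧
        (∀ j : Fin N, ∑ i ∈ Iic j, φ (g (p i)) ≤
          ∑ i ∈ Iic j, (Ebar i + α * δ i)) ∧
        (∀ j : Fin N, ∑ i ∈ Iic j, δ i ≤ ∑ i ∈ Iic j, H i) ∧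
        v = ∑ i, g (p i)} =
    sSup {v : ℝ | ∃ p : Fin N → ℝ,
        (∀ i, 0 ≤ p i) ∧
        (∀ j : Fin N, ∑ i ∈ Iic j, p i ≤ ∑ i ∈ Iic j, E i) ∧
        (∀ j : Fin N, ∑ i ∈ Iic j, φ (g (p i)) ≤
          ∑ i ∈ Iic j, (Ebar i + α * H i)) ∧
        v = ∑ i, g (p i)} := by
  congr 1
  ext v
  constructor
  · rintro ⟨p, δ, hp, hδ, hb, hc, hd, rfl⟩
    refine ⟨p, hp, hb, fun j => le_trans (hc j) ?_, rfl⟩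
    simp only [Finset.sum_add_distrib, ← Finset.mul_sum]
    exact add_le_add_right (mul_le_mul_of_nonneg_left (hd j) hα0) _
  · rintro ⟨p, hp, hb, hc, rfl⟩
    exact ⟨p, H, hp, hH, hb, hc, fun j => le_refl _, rfl⟩
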